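/- Fix κ_j, κ_{j+1} ∈ ℝ. Define for h > 0 the Euclidean insertion angle α⁰(h) = κ_j (h/2) + (1/2)·((κ_{j+1} − κ_j)/h)·(h/2)² and the spherical insertion angle α¹(h) = κ_j sinh(h/2) + ((κ_{j+1} − κ_j cosh h)/sinh h)·(cosh(h/2) − 1). Then there exist constants C > 0 and h₀ > 0 such that |α¹(h) − α⁰(h)| ≤ C h³ for all 0 < h < h₀. -/

import Mathlib

lemma exp_taylor4 (x : ℝ) (hx : |x| ≤ 1) :
    |Real.exp x - (1 + x + x^2/2 + x^3/6)| ≤ |x|^4 := by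
  have h := Real.exp_bound hx (n := 4) (by norm_num)
  have hs : ∑ m ∈ Finset.range 4, x ^ m / m.factorial = 1 + x + x^2/2 + x^3/6 := by
    simp [Finset.sum_range_succ, Nat.factorial]
  rw [hs] at h
  have : |x|^4 * ((4:ℕ).succ / ((4:ℕ).factorial * 4)) ≤ |x|^4 := by
    have : ((4:ℕ).succ / ((4:ℕ).factorial * 4) : ℝ) = 5/96 := by norm_num [Nat.factorial]
    rw [this]
    nlinarith [pow_nonneg (abs_nonneg x) 4]
  linarith

lemma exp_taylor3 (x : ℝ) (hx : |x| ≤ 1) :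
    |Real.exp x - (1 + x + x^2/2)| ≤ |x|^3 := by
  have h := Real.exp_bound hx (n := 3) (by norm_num)
  have hs : ∑ m ∈ Finset.range 3, x ^ m / m.factorial = 1 + x + x^2/2 := by
    simp [Finset.sum_range_succ, Nat.factorial]
  rw [hs] at h
  have : |x|^3 * ((3:ℕ).succ / ((3:ℕ).factorial * 3)) ≤ |x|^3 := by
    have : ((3:ℕ).succ / ((3:ℕ).factorial * 3) : ℝ) = 2/9 := by norm_num [Nat.factorial]
    rw [this]
    nlinarith [pow_nonneg (abs_nonneg x) 3]
  linarith

lemma cosh_taylor (x : ℝ) (hx : |x| ≤ 1) :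
    |Real.cosh x - (1 + x^2/2)| ≤ |x|^4 := by
  have h1 := exp_taylor4 x hx
  have h2 : |Real.exp (-x) - (1 - x + x^2/2 - x^3/6)| ≤ |x|^4 := by
    have h := exp_taylor4 (-x) (by rwa [abs_neg])
    rw [abs_neg] at h
    convert h using 3 <;> ring
  rw [Real.cosh_eq]
  rw [abs_le] at h1 h2 ⊢
  constructor <;> nlinarith [h1.1, h1.2, h2.1, h2.2]

lemma sinh_taylor (x : ℝ) (hx : |x| ≤ 1) :
    |Real.sinh x - (x + x^3/6)| ≤ |x|^4 := by
  have h1 := exp_taylor4 x hx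
  have h2 : |Real.exp (-x) - (1 - x + x^2/2 - x^3/6)| ≤ |x|^4 := by
    have h := exp_taylor4 (-x) (by rwa [abs_neg])
    rw [abs_neg] at h
    convert h using 3 <;> ring
  rw [Real.sinh_eq]
  rw [abs_le] at h1 h2 ⊢
  constructor <;> nlinarith [h1.1, h1.2, h2.1, h2.2]

lemma sinh_lin (x : ℝ) (hx : |x| ≤ 1) :
    |Real.sinh x - x| ≤ |x|^3 := by
  have h1 := exp_taylor3 x hx
  have h2 : |Real.exp (-x) - (1 - x + x^2/2)| ≤ |x|^3 := by
    have h := exp_taylor3 (-x) (by rwa [abs_neg])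
    rw [abs_neg] at h
    convert h using 3 <;> ring
  rw [Real.sinh_eq]
  rw [abs_le] at h1 h2 ⊢
  constructor <;> nlinarith [h1.1, h1.2, h2.1, h2.2]


set_option maxHeartbeats 1600000 in
/-- Proximity bound: the spherical insertion angle deviates from the Euclidean
one by at most `C h³` for all sufficiently small `h > 0`. -/
theorem stmt_15 (κj κj1 : ℝ) :
    ∃ C > (0:ℝ), ∃ h₀ > (0:ℝ), ∀ h : ℝ, 0 < h → h < h₀ →
      |(κj * Real.sinh (h/2)
          + (κj1 - κj * Real.cosh h) / Real.sinh h * (Real.cosh (h/2) - 1))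
        - (κj * (h/2) + (1/2) * ((κj1 - κj) / h) * (h/2)^2)|
      ≤ C * h ^ 3 := by
  refine ⟨3*|κj| + |κj1 - κj| + 1, by positivity, 1, by norm_num, ?_⟩
  intro h hh h1
  have hh1 : h ≤ 1 := h1.le
  have hh2 : 0 < h/2 := by linarith
  have hhd : |h/2| ≤ 1 := by rw [abs_of_pos hh2]; linarith
  have hha : |h| ≤ 1 := by rw [abs_of_pos hh]; linarith
  have hS : h < Real.sinh h := Real.self_lt_sinh_iff.mpr hh
  have hS0 : 0 < Real.sinh h := lt_trans hh hS
  have hc2 := cosh_taylor (h/2) hhd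
  have hch := cosh_taylor h hha
  have hsh := sinh_taylor h hha
  have hsl := sinh_lin (h/2) hhd
  rw [abs_of_pos hh2] at hc2 hsl
  rw [abs_of_pos hh] at hch hsh
  -- numerator bound
  have hN : |8*(Real.cosh (h/2)-1) - h*Real.sinh h| ≤ 2*h^4 := by
    rw [abs_le] at hc2 hsh ⊢
    constructor <;>
      nlinarith [hc2.1, hc2.2, hsh.1, hsh.2, pow_pos hh 4, sq_nonneg h,
        mul_le_of_le_one_left (pow_pos hh 4).le hh1]
  have hch1 : Real.cosh h - 1 ≤ 3/2*h^2 := by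
    rw [abs_le] at hch
    have hsq : h^2 ≤ 1 := by nlinarith
    nlinarith [hch.2, hsq, sq_nonneg h]
  have hc21 : Real.cosh (h/2) - 1 ≤ 3/2*h^2 := by
    rw [abs_le] at hc2
    have hsq : h^2 ≤ 1 := by nlinarith
    nlinarith [hc2.2, hsq, sq_nonneg h]
  have hcosh1 : (1:ℝ) ≤ Real.cosh h := Real.one_le_cosh h
  have hcosh2 : (1:ℝ) ≤ Real.cosh (h/2) := Real.one_le_cosh (h/2)
  have hid : κj * Real.sinh (h/2)
        + (κj1 - κj * Real.cosh h) / Real.sinh h * (Real.cosh (h/2) - 1)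
        - (κj * (h/2) + (1/2) * ((κj1 - κj) / h) * (h/2)^2)
      = κj * (Real.sinh (h/2) - h/2)
        + (κj1 - κj) * (8*(Real.cosh (h/2)-1) - h*Real.sinh h) / (8*Real.sinh h)
        - κj * (Real.cosh h - 1) * (Real.cosh (h/2) - 1) / Real.sinh h := by
    have hs := hS0.ne'
    have hhne := hh.ne'
    generalize Real.sinh h = s at hs ⊢
    generalize Real.cosh h = c
    generalize Real.cosh (h/2) = c2
    generalize Real.sinh (h/2) = s2
    field_simp
    ring
  rw [hid]
  have b1 : |κj * (Real.sinh (h/2) - h/2)| ≤ |κj| * (h^3/8) := by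
    rw [abs_mul]
    have := mul_le_mul_of_nonneg_left hsl (abs_nonneg κj)
    calc |κj| * |Real.sinh (h/2) - h/2| ≤ |κj| * (h/2)^3 := this
      _ = |κj| * (h^3/8) := by ring
  have b2 : |(κj1 - κj) * (8*(Real.cosh (h/2)-1) - h*Real.sinh h) / (8*Real.sinh h)|
      ≤ |κj1 - κj| * (h^3/4) := by
    rw [abs_div, abs_mul, abs_of_pos (by linarith : (0:ℝ) < 8*Real.sinh h),
      mul_div_assoc]
    have hdd : |8*(Real.cosh (h/2)-1) - h*Real.sinh h| / (8*Real.sinh h)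
        ≤ (2*h^4) / (8*h) := by
      apply div_le_div₀ (by positivity) hN (by linarith)
      linarith
    have : (2*h^4)/(8*h) = h^3/4 := by field_simp; ring
    rw [this] at hdd
    exact mul_le_mul_of_nonneg_left hdd (abs_nonneg _)
  have b3 : |κj * (Real.cosh h - 1) * (Real.cosh (h/2) - 1) / Real.sinh h|
      ≤ |κj| * (9/4*h^3) := by
    rw [abs_div, abs_mul, abs_mul, abs_of_nonneg (by linarith : (0:ℝ) ≤ Real.cosh h - 1),
      abs_of_nonneg (by linarith : (0:ℝ) ≤ Real.cosh (h/2) - 1),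
      abs_of_pos hS0, mul_assoc, mul_div_assoc]
    have hnum : (Real.cosh h - 1) * (Real.cosh (h/2) - 1) ≤ (3/2*h^2) * (3/2*h^2) := by
      nlinarith [hch1, hc21, hcosh1, hcosh2, sq_nonneg h]
    have hdd : (Real.cosh h - 1) * (Real.cosh (h/2) - 1) / Real.sinh h
        ≤ ((3/2*h^2) * (3/2*h^2)) / h := by
      exact div_le_div₀ (by positivity) hnum hh (by linarith)
    have : ((3/2*h^2) * (3/2*h^2)) / h = 9/4*h^4/h := by ring
    rw [this] at hdd
    have h2 : (9:ℝ)/4*h^4/h = 9/4*h^3 := by field_simp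
    rw [h2] at hdd
    exact mul_le_mul_of_nonneg_left hdd (abs_nonneg _)
  have tri : ∀ a b c : ℝ, |a + b - c| ≤ |a| + |b| + |c| := by
    intro a b c
    calc |a + b - c| ≤ |a + b| + |c| := abs_sub _ _
      _ ≤ |a| + |b| + |c| := by linarith [abs_add_le a b]
  refine le_trans (tri _ _ _) ?_
  have hp : 0 < h^3 := pow_pos hh 3
  nlinarith [b1, b2, b3, abs_nonneg κj, abs_nonneg (κj1 - κj), hp]
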